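/- arXiv:2512.12894 — 6 statements merged into one kernel-verified Lean document; each statement's English description precedes it below -/
import Mathlib

section
/- Let G be a locally compact second countable topological group with left Haar measure λ, and let f : G → ℝ be integrable with respect to λ. If for every compact set K ⊆ G with λ(K) > 0 one has (f * (χ_K/λ(K)))(x) ≥ 0 for λ-almost every x ∈ G, then f(x) ≥ 0 for λ-almost every x ∈ G. -/
open MeasureTheory Filter
open scoped Topology ENNReal

private theorem conv_step {G : Type*} [Group G] [TopologicalSpace G] [IsTopologicalGroup G]
    [LocallyCompactSpace G] [SecondCountableTopology G]
    [MeasurableSpace G] [BorelSpace G]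
    (μ : Measure G) [μ.IsHaarMeasure]
    (f g : G → ℝ) (hf : Integrable f μ)
    (hg : Continuous g) (hgs : HasCompactSupport g) (hg01 : ∀ x, g x ∈ Set.Icc (0:ℝ) 1)
    (K : Set G) (hKcl : IsClosed K)
    (hx : ∀ᵐ x ∂μ, 0 ≤ ∫ h, f h * K.indicator (fun _ => (1:ℝ)) (h⁻¹ * x) ∂μ) :
    0 ≤ ∫ h, f h * (∫ u, g (h * u) * K.indicator (fun _ => (1:ℝ)) u ∂μ) ∂μ := by
  set ind := K.indicator (fun _ => (1:ℝ)) with hind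
  have hKm : MeasurableSet K := hKcl.measurableSet
  have hindm : Measurable ind := measurable_const.indicator hKm
  have hind01 : ∀ y, ind y ∈ Set.Icc (0:ℝ) 1 := by
    intro y; by_cases h : y ∈ K <;> simp [hind, Set.indicator_apply, h]
  set T : G × G → ℝ := fun p => g p.1 * (f p.2 * ind (p.2⁻¹ * p.1)) with hT
  have hTm : AEStronglyMeasurable T (μ.prod μ) := by
    refine AEStronglyMeasurable.mul ((hg.comp continuous_fst).aestronglyMeasurable) ?_
    refine AEStronglyMeasurable.mul ?_ ?_
    · exact hf.1.comp_quasiMeasurePreserving MeasureTheory.Measure.quasiMeasurePreserving_snd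
    · exact ((hindm.comp (measurable_snd.inv.mul measurable_fst))).aestronglyMeasurable
  have hDint : Integrable
      (fun p : G × G => (tsupport g).indicator (fun _ => (1:ℝ)) p.1 * ‖f p.2‖) (μ.prod μ) := by
    refine Integrable.mul_prod ?_ hf.norm
    exact (integrable_indicator_iff (isClosed_tsupport g).measurableSet).2
      (integrableOn_const hgs.measure_lt_top.ne)
  have hTint : Integrable T (μ.prod μ) := by
    refine hDint.mono' hTm (Filter.Eventually.of_forall ?_)
    rintro ⟨x, h⟩
    by_cases hx1 : x ∈ tsupport g
    · simp only [hT, Set.indicator_of_mem hx1]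
      have h1 : ‖g x * (f h * ind (h⁻¹ * x))‖ = ‖g x‖ * ‖f h‖ * ‖ind (h⁻¹ * x)‖ := by
        simp [abs_mul, mul_assoc]
      rw [h1]
      have hgx : ‖g x‖ ≤ 1 := by
        rw [Real.norm_eq_abs]
        exact abs_le.2 ⟨by linarith [(hg01 x).1], (hg01 x).2⟩
      have hix : ‖ind (h⁻¹*x)‖ ≤ 1 := by
        rw [Real.norm_eq_abs]
        exact abs_le.2 ⟨by linarith [(hind01 (h⁻¹*x)).1], (hind01 (h⁻¹*x)).2⟩
      calc ‖g x‖ * ‖f h‖ * ‖ind (h⁻¹ * x)‖ ≤ 1 * ‖f h‖ * 1 := by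
            gcongr
        _ = 1 * ‖f h‖ := by ring
    · simp [hT, image_eq_zero_of_notMem_tsupport hx1, Set.indicator_of_notMem hx1]
  have h1 : 0 ≤ ∫ x, g x * (∫ h, f h * ind (h⁻¹ * x) ∂μ) ∂μ := by
    refine integral_nonneg_of_ae ?_
    filter_upwards [hx] with x hx0
    exact mul_nonneg (hg01 x).1 hx0
  have h2 : ∫ x, g x * (∫ h, f h * ind (h⁻¹ * x) ∂μ) ∂μ
      = ∫ h, f h * (∫ x, g x * ind (h⁻¹ * x) ∂μ) ∂μ := by
    calc ∫ x, g x * (∫ h, f h * ind (h⁻¹ * x) ∂μ) ∂μ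
        = ∫ x, ∫ h, T (x, h) ∂μ ∂μ := by
          refine integral_congr_ae (.of_forall fun x => ?_)
          dsimp only
          rw [← integral_const_mul]
      _ = ∫ h, ∫ x, T (x, h) ∂μ ∂μ := integral_integral_swap hTint
      _ = ∫ h, f h * (∫ x, g x * ind (h⁻¹ * x) ∂μ) ∂μ := by
          refine integral_congr_ae (.of_forall fun h => ?_)
          dsimp only
          rw [← integral_const_mul]
          refine integral_congr_ae (.of_forall fun x => ?_)
          simp [hT]; ring
  have h3 : ∀ h : G, ∫ x, g x * ind (h⁻¹ * x) ∂μ = ∫ u, g (h * u) * ind u ∂μ := by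
    intro h
    rw [← integral_mul_left_eq_self (fun x => g x * ind (h⁻¹ * x)) h]
    refine integral_congr_ae (.of_forall fun u => ?_)
    simp [inv_mul_cancel_left]
  rw [h2] at h1
  simpa only [h3] using h1

private theorem conv_key {G : Type*} [Group G] [TopologicalSpace G] [IsTopologicalGroup G]
    [LocallyCompactSpace G] [SecondCountableTopology G]
    [MeasurableSpace G] [BorelSpace G]
    (μ : Measure G) [μ.IsHaarMeasure]
    (f g : G → ℝ) (hf : Integrable f μ)
    (hg : Continuous g) (hgs : HasCompactSupport g) (hg01 : ∀ x, g x ∈ Set.Icc (0:ℝ) 1)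
    (hstep : ∀ K : Set G, IsClosed K →
      (∀ᵐ x ∂μ, 0 ≤ ∫ h, f h * K.indicator (fun _ => (1:ℝ)) (h⁻¹ * x) ∂μ) →
      0 ≤ ∫ h, f h * (∫ u, g (h * u) * K.indicator (fun _ => (1:ℝ)) u ∂μ) ∂μ)
    (hconv' : ∀ K : Set G, IsCompact K → 0 < μ K →
      ∀ᵐ x ∂μ, 0 ≤ ∫ h, f h * K.indicator (fun _ => (1:ℝ)) (h⁻¹ * x) ∂μ) :
    0 ≤ ∫ z, f z * g z ∂μ := by
  obtain ⟨V, hV⟩ := (𝓝 (1 : G)).exists_antitone_basis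
  have hVmem : ∀ n, V n ∈ 𝓝 (1 : G) := fun n => hV.toHasBasis.mem_of_mem trivial
  have hex : ∀ n : ℕ, ∃ L : Set G, IsCompact L ∧ IsClosed L ∧ L ∈ 𝓝 (1:G) ∧ L ⊆ V n := by
    intro n
    obtain ⟨W, hWV, hWo, h1W⟩ := mem_nhds_iff.1 (hVmem n)
    obtain ⟨L, hLc, hLcl, hL1, hLW⟩ :=
      exists_compact_closed_between isCompact_singleton hWo (by simpa using h1W)
    exact ⟨L, hLc, hLcl,
      mem_nhds_iff.2 ⟨interior L, interior_subset, isOpen_interior, by simpa using hL1⟩,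
      hLW.trans hWV⟩
  choose Kc hKco hKcl hKnhds hKV using hex
  set c : ℕ → ℝ := fun n => (μ (Kc n)).toReal with hc
  have hcpos : ∀ n, 0 < c n := fun n =>
    ENNReal.toReal_pos (Measure.measure_pos_of_mem_nhds μ (hKnhds n)).ne' (hKco n).measure_lt_top.ne
  set R : ℕ → G → ℝ := fun n h => ∫ u, g (h * u) * (Kc n).indicator (fun _ => (1:ℝ)) u ∂μ
    with hR
  have hRset : ∀ n h, R n h = ∫ u in Kc n, g (h * u) ∂μ := by
    intro n h
    show (∫ u, g (h * u) * (Kc n).indicator (fun _ => (1:ℝ)) u ∂μ) = _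
    rw [← integral_indicator (hKcl n).measurableSet]
    congr 1
    funext u
    by_cases hu : u ∈ Kc n <;> simp [Set.indicator_apply, hu]
  have hgnorm : ∀ x, ‖g x‖ ≤ 1 := by
    intro x
    rw [Real.norm_eq_abs]
    exact abs_le.2 ⟨by linarith [(hg01 x).1], (hg01 x).2⟩
  have hRbound : ∀ n h, ‖R n h‖ ≤ c n := by
    intro n h
    rw [hRset]
    calc ‖∫ u in Kc n, g (h * u) ∂μ‖ ≤ 1 * (μ (Kc n)).toReal :=
          norm_setIntegral_le_of_norm_le_const (hKco n).measure_lt_top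
            (fun u _ => hgnorm _)
      _ = c n := by rw [one_mul]
  have hRmeas : ∀ n, StronglyMeasurable (R n) := by
    intro n
    apply StronglyMeasurable.integral_prod_right' (f := fun p : G × G =>
      g (p.1 * p.2) * (Kc n).indicator (fun _ => (1:ℝ)) p.2)
    exact ((hg.measurable.comp (measurable_fst.mul measurable_snd)).mul
      ((measurable_const.indicator (hKcl n).measurableSet).comp measurable_snd)).stronglyMeasurable
  -- nonnegativity of each term
  have hn : ∀ n, 0 ≤ ∫ h, f h * (R n h / c n) ∂μ := by
    intro n
    have h0 := hstep (Kc n) (hKcl n) (hconv' (Kc n) (hKco n)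
      (ENNReal.toReal_pos_iff.1 (hcpos n)).1)
    have : ∫ h, f h * (R n h / c n) ∂μ = (∫ h, f h * R n h ∂μ) / c n := by
      simp_rw [← mul_div_assoc]
      exact integral_div (c n) _
    rw [this]
    exact div_nonneg h0 (hcpos n).le
  -- convergence
  have hlim : ∀ h : G, Tendsto (fun n => f h * (R n h / c n)) atTop (𝓝 (f h * g h)) := by
    intro h
    refine Tendsto.const_mul (f h) ?_
    rw [Metric.tendsto_atTop]
    intro ε hε
    have hcontat : Tendsto (fun u => g (h * u)) (𝓝 (1:G)) (𝓝 (g h)) := by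
      have := (hg.comp (continuous_mul_left h)).tendsto (1 : G)
      simpa [Function.comp_def] using this
    have hev : ∀ᶠ u in 𝓝 (1:G), dist (g (h * u)) (g h) < ε / 2 :=
      Metric.tendsto_nhds.1 hcontat (ε / 2) (half_pos hε)
    obtain ⟨N, -, hN⟩ := hV.toHasBasis.eventually_iff.1 hev
    refine ⟨N, fun n hnN => ?_⟩
    have hsub : Kc n ⊆ V N := (hKV n).trans (hV.antitone hnN)
    have hIg : IntegrableOn (fun u => g (h * u)) (Kc n) μ :=
      Measure.integrableOn_of_bounded (hKco n).measure_lt_top.ne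
        (hg.comp (continuous_mul_left h)).aestronglyMeasurable
        (Eventually.of_forall fun u => hgnorm _)
    have hsubint : R n h - g h * c n = ∫ u in Kc n, (g (h * u) - g h) ∂μ := by
      rw [integral_sub hIg (integrableOn_const (hKco n).measure_lt_top.ne),
        hRset, setIntegral_const, smul_eq_mul]
      exact congrArg (fun t => (∫ u in Kc n, g (h * u) ∂μ) - t) (mul_comm (g h) (c n))
    have hnormsub : ‖R n h - g h * c n‖ ≤ ε / 2 * c n := by
      rw [hsubint]
      exact norm_setIntegral_le_of_norm_le_const (hKco n).measure_lt_top
        (fun u hu => by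
          rw [Real.norm_eq_abs, ← Real.dist_eq]; exact (hN (hsub hu)).le)
    have hquot : R n h / c n - g h = (R n h - g h * c n) / c n := by
      rw [sub_div, mul_div_cancel_right₀ _ (hcpos n).ne']
    rw [Real.dist_eq, hquot, abs_div, abs_of_pos (hcpos n)]
    calc |R n h - g h * c n| / c n ≤ ε / 2 * c n / c n :=
          (div_le_div_iff_of_pos_right (hcpos n)).2 ((Real.norm_eq_abs _) ▸ hnormsub)
      _ = ε / 2 := by rw [mul_div_cancel_right₀ _ (hcpos n).ne']
      _ < ε := half_lt_self hε
  -- dominated convergence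
  have htend : Tendsto (fun n => ∫ h, f h * (R n h / c n) ∂μ) atTop (𝓝 (∫ z, f z * g z ∂μ)) := by
    refine tendsto_integral_of_dominated_convergence (fun h => ‖f h‖) ?_ hf.norm ?_ ?_
    · intro n
      exact hf.1.mul ((hRmeas n).measurable.div_const (c n)).aestronglyMeasurable
    · intro n
      refine Eventually.of_forall fun h => ?_
      rw [norm_mul]
      have : ‖R n h / c n‖ ≤ 1 := by
        rw [norm_div, Real.norm_eq_abs (c n), abs_of_pos (hcpos n)]
        exact (div_le_one (hcpos n)).2 (hRbound n h)
      calc ‖f h‖ * ‖R n h / c n‖ ≤ ‖f h‖ * 1 := by gcongr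
        _ = ‖f h‖ := mul_one _
    · exact Eventually.of_forall hlim
  exact ge_of_tendsto' htend hn

private theorem conv_final {G : Type*} [Group G] [TopologicalSpace G] [IsTopologicalGroup G]
    [LocallyCompactSpace G] [SecondCountableTopology G]
    [MeasurableSpace G] [BorelSpace G]
    (μ : Measure G) [μ.IsHaarMeasure]
    (f : G → ℝ) (hf : Integrable f μ)
    (hdual : ∀ g : G → ℝ, Continuous g → HasCompactSupport g →
      (∀ x, g x ∈ Set.Icc (0:ℝ) 1) → 0 ≤ ∫ z, f z * g z ∂μ) :
    ∀ᵐ x ∂μ, 0 ≤ f x := by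
  have hreg : μ.Regular := by
    obtain ⟨K, hK, h1K⟩ := exists_compact_mem_nhds (1 : G)
    exact Measure.regular_of_isMulLeftInvariant hK ⟨1, mem_interior_iff_mem_nhds.2 h1K⟩
      hK.measure_lt_top.ne
  have hlt : (∫⁻ x, (‖f x‖₊ : ℝ≥0∞) ∂μ) ≠ ∞ := hf.2.ne
  have main : ∀ s, MeasurableSet s → μ s < ∞ → 0 ≤ ∫ x in s, f x ∂μ := by
    intro s hs hsfin
    refine le_of_forall_pos_le_add ?_
    intro ε hε
    have hε3 : (0:ℝ) < ε / 3 := by linarith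
    obtain ⟨δ, hδ0, hδ⟩ := exists_pos_setLIntegral_lt_of_measure_lt
      (f := fun x => (‖f x‖₊ : ℝ≥0∞)) hlt (ENNReal.ofReal_pos.2 hε3).ne'
    have hbd : ∀ φ : G → ℝ, (∀ x, ‖φ x‖ ≤ ‖f x‖) → ∀ t : Set G, μ t < δ →
        ‖∫ x in t, φ x ∂μ‖ ≤ ε / 3 := by
      intro φ hφ t ht
      have h1 : (∫⁻ x in t, ENNReal.ofReal ‖φ x‖ ∂μ) ≤ ∫⁻ x in t, (‖f x‖₊ : ℝ≥0∞) ∂μ := by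
        refine lintegral_mono fun x => ?_
        rw [← enorm_eq_nnnorm, ← ofReal_norm]
        exact ENNReal.ofReal_le_ofReal (hφ x)
      have h2 := (h1.trans_lt (hδ t ht)).le
      calc ‖∫ x in t, φ x ∂μ‖ ≤ (∫⁻ x in t, ENNReal.ofReal ‖φ x‖ ∂μ).toReal :=
            norm_integral_le_lintegral_norm _
        _ ≤ ε / 3 := ENNReal.toReal_le_of_le_ofReal hε3.le h2
    obtain ⟨C, hCs, hCco, hCcl, hCd⟩ := hs.exists_isCompact_isClosed_diff_lt hsfin.ne hδ0.ne'
    obtain ⟨U, hCU, hUo, hUfin, hUd⟩ := hCcl.measurableSet.exists_isOpen_diff_lt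
      ((measure_mono hCs).trans_lt hsfin).ne hδ0.ne'
    obtain ⟨g, hg1, hg0, hgcs, hg01⟩ := exists_continuous_one_zero_of_isCompact hCco
      hUo.isClosed_compl (Set.disjoint_left.2 fun x hxC hxUc => hxUc (hCU hxC))
    have hgnorm : ∀ x, ‖g x‖ ≤ 1 := by
      intro x
      rw [Real.norm_eq_abs]
      exact abs_le.2 ⟨by linarith [(hg01 x).1], (hg01 x).2⟩
    have hfg : Integrable (fun z => f z * g z) μ := by
      refine hf.norm.mono' (hf.1.mul g.continuous.aestronglyMeasurable)
        (Eventually.of_forall fun z => ?_)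
      rw [norm_mul]
      calc ‖f z‖ * ‖g z‖ ≤ ‖f z‖ * 1 :=
            mul_le_mul_of_nonneg_left (hgnorm z) (norm_nonneg _)
        _ = ‖f z‖ := mul_one _
    have hpos : 0 ≤ ∫ z, f z * g z ∂μ := hdual g g.continuous hgcs hg01
    -- E1
    have hE1 : ∫ x in s \ C, f x ∂μ = (∫ x in s, f x ∂μ) - ∫ x in C, f x ∂μ :=
      integral_diff hCcl.measurableSet hf.integrableOn hCs
    have hE2 : ‖∫ x in s \ C, f x ∂μ‖ ≤ ε / 3 := hbd f (fun _ => le_rfl) _ hCd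
    have hE3 : ∫ x in C, (f x * g x) ∂μ = ∫ x in C, f x ∂μ :=
      setIntegral_congr_fun hCcl.measurableSet fun x hx => by
        rw [hg1 hx]; simp
    have hE4 : ∫ x in U, (f x * g x) ∂μ = ∫ z, f z * g z ∂μ :=
      setIntegral_eq_integral_of_forall_compl_eq_zero fun x hx => by
        rw [hg0 hx]; simp
    have hE5 : ∫ x in U \ C, (f x * g x) ∂μ
        = (∫ x in U, (f x * g x) ∂μ) - ∫ x in C, (f x * g x) ∂μ :=
      integral_diff hCcl.measurableSet hfg.integrableOn hCU
    have hE6 : ‖∫ x in U \ C, (f x * g x) ∂μ‖ ≤ ε / 3 := by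
      refine hbd _ (fun x => ?_) _ hUd
      rw [norm_mul]
      calc ‖f x‖ * ‖g x‖ ≤ ‖f x‖ * 1 :=
            mul_le_mul_of_nonneg_left (hgnorm x) (norm_nonneg _)
        _ = ‖f x‖ := mul_one _
    rw [Real.norm_eq_abs] at hE2 hE6
    have hE2' := abs_le.1 hE2
    have hE6' := abs_le.1 hE6
    linarith [hE2'.1, hE2'.2, hE6'.1, hE6'.2]
  have := ae_nonneg_of_forall_setIntegral_nonneg hf main
  filter_upwards [this] with x hx using hx

/-- If `f` is integrable on a locally compact second countable group with left Haar
measure `μ`, and the convolution `f * (χ_K / μ K)` is a.e. nonnegative for every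
compact `K` of positive measure, then `f` is a.e. nonnegative. -/
theorem stmt1 {G : Type*} [Group G] [TopologicalSpace G] [IsTopologicalGroup G]
    [LocallyCompactSpace G] [SecondCountableTopology G]
    [MeasurableSpace G] [BorelSpace G]
    (μ : Measure G) [μ.IsHaarMeasure]
    (f : G → ℝ) (hf : Integrable f μ)
    (hconv : ∀ K : Set G, IsCompact K → 0 < μ K →
      ∀ᵐ x ∂μ, 0 ≤ ∫ h, f h * (K.indicator (fun _ => (1 : ℝ)) (h⁻¹ * x) / (μ K).toReal) ∂μ) :
    ∀ᵐ x ∂μ, 0 ≤ f x := by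
  have hconv' : ∀ K : Set G, IsCompact K → 0 < μ K →
      ∀ᵐ x ∂μ, 0 ≤ ∫ h, f h * K.indicator (fun _ => (1:ℝ)) (h⁻¹ * x) ∂μ := by
    intro K hK hK0
    filter_upwards [hconv K hK hK0] with x hx
    have hc : (0:ℝ) < (μ K).toReal := ENNReal.toReal_pos hK0.ne' hK.measure_lt_top.ne
    have heq : ∫ h, f h * (K.indicator (fun _ => (1:ℝ)) (h⁻¹ * x) / (μ K).toReal) ∂μ
        = (∫ h, f h * K.indicator (fun _ => (1:ℝ)) (h⁻¹ * x) ∂μ) / (μ K).toReal := by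
      simp_rw [← mul_div_assoc]
      exact integral_div _ _
    rw [heq] at hx
    have h2 := mul_nonneg hx hc.le
    rwa [div_mul_cancel₀ _ hc.ne'] at h2
  exact conv_final μ f hf fun g hg hgs hg01 =>
    conv_key μ f g hf hg hgs hg01
      (fun K hKcl hx => conv_step μ f g hf hg hgs hg01 K hKcl hx) hconv'
end

section
/- Let G be a locally compact second countable unimodular topological group with Haar measure λ, let (F_n) be a two-sided Følner sequence of G consisting of compact symmetric sets (F_n = F_n⁻¹) each containing the identity, and let N : ℕ → ℕ be strictly increasing with N(2) > 2. Then there exists a strictly increasing sequence of indices (n_k)_{k≥1} with n₁ = 1 such that, defining E₁ = F_{n₁} and E_k = (E_{k−1}^{N(k)−2})⁻¹ F_{n_k} (E_{k−1}^{N(k)−2})⁻¹ for k ≥ 2 (where A^m denotes the m-fold product set), one has λ(E_k)/λ(F_{n_k}) → 1 as k → ∞. -/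
open MeasureTheory Pointwise Filter Topology
open scoped ENNReal

private lemma isCompact_pow_aux {G : Type*} [Group G] [TopologicalSpace G]
    [IsTopologicalGroup G] {s : Set G} (hs : IsCompact s) : ∀ n : ℕ, IsCompact (s ^ n)
  | 0 => by rw [pow_zero]; exact isCompact_singleton
  | (n+1) => by rw [pow_succ]; exact (isCompact_pow_aux hs n).mul hs

/-- Given a two-sided Følner sequence `(F n)` of symmetric compact sets containing
the identity in a locally compact second countable unimodular group, and a strictly
increasing `N` with `N 2 > 2`, there is a subsequence `(F (nk k))` with `nk 1 = 1`
such that the recursively defined sets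
`E 1 = F (nk 1)`, `E k = (E (k-1) ^ (N k - 2))⁻¹ * F (nk k) * (E (k-1) ^ (N k - 2))⁻¹`
satisfy `μ (E k) / μ (F (nk k)) → 1`. -/
theorem stmt7 {G : Type*} [Group G] [TopologicalSpace G] [IsTopologicalGroup G]
    [LocallyCompactSpace G] [SecondCountableTopology G]
    [MeasurableSpace G] [BorelSpace G]
    (μ : Measure G) [μ.IsHaarMeasure] [μ.IsMulRightInvariant]
    (F : ℕ → Set G)
    (hFcpt : ∀ n, IsCompact (F n))
    (hFsymm : ∀ n, (F n)⁻¹ = F n)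
    (hFone : ∀ n, (1 : G) ∈ F n)
    (hFpos : ∀ n, 0 < μ (F n))
    (hFol : ∀ K : Set G, IsCompact K →
      Tendsto (fun n => μ ((K * F n * K) \ F n) / μ (F n)) atTop (𝓝 0))
    (N : ℕ → ℕ) (hN : StrictMono N) (hN2 : 2 < N 2) :
    ∃ nk : ℕ → ℕ, StrictMono nk ∧ nk 1 = 1 ∧
      ∃ E : ℕ → Set G, E 1 = F (nk 1) ∧
        (∀ k ≥ 2, E k =
          ((E (k - 1)) ^ (N k - 2))⁻¹ * F (nk k) * ((E (k - 1)) ^ (N k - 2))⁻¹) ∧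
        Tendsto (fun k => (μ (E k)).toReal / (μ (F (nk k))).toReal) atTop (𝓝 1) := by
  classical
  have key : ∀ (k : ℕ) (p : {q : ℕ × Set G // IsCompact q.2 ∧ (1:G) ∈ q.2}),
      ∃ n : ℕ, p.1.1 < n ∧
        μ (((p.1.2 ^ (N k - 2))⁻¹ * F n * (p.1.2 ^ (N k - 2))⁻¹) \ F n) / μ (F n)
          ≤ (k : ℝ≥0∞)⁻¹ := by
    intro k p
    set K : Set G := (p.1.2 ^ (N k - 2))⁻¹ with hK
    have hKc : IsCompact K := (isCompact_pow_aux p.2.1 _).inv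
    have hpos : (0 : ℝ≥0∞) < (k : ℝ≥0∞)⁻¹ := by
      simp [ENNReal.inv_pos]
    have h1 : ∀ᶠ n in atTop, μ ((K * F n * K) \ F n) / μ (F n) < (k : ℝ≥0∞)⁻¹ :=
      (hFol K hKc).eventually_lt_const hpos
    obtain ⟨n, hn1, hn2⟩ := ((eventually_gt_atTop p.1.1).and h1).exists
    exact ⟨n, hn1, hn2.le⟩
  choose f hf1 hf2 using key
  -- one-step constructor
  have hone_pow : ∀ (S : Set G) (m : ℕ), (1:G) ∈ S → (1:G) ∈ (S ^ m)⁻¹ := by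
    intro S m hS
    rw [Set.mem_inv, inv_one]
    exact Set.one_mem_pow hS
  let step : ∀ (k : ℕ), {q : ℕ × Set G // IsCompact q.2 ∧ (1:G) ∈ q.2} →
      {q : ℕ × Set G // IsCompact q.2 ∧ (1:G) ∈ q.2} := fun k p =>
    ⟨(f k p, (p.1.2 ^ (N k - 2))⁻¹ * F (f k p) * (p.1.2 ^ (N k - 2))⁻¹),
      ((((isCompact_pow_aux p.2.1 _).inv.mul (hFcpt _)).mul
        (isCompact_pow_aux p.2.1 _).inv)),
      by
        have h1 : (1:G) ∈ (p.1.2 ^ (N k - 2))⁻¹ := hone_pow _ _ p.2.2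
        have := Set.mul_mem_mul (Set.mul_mem_mul h1 (hFone (f k p))) h1
        simpa using this⟩
  let P : ℕ → {q : ℕ × Set G // IsCompact q.2 ∧ (1:G) ∈ q.2} := fun k =>
    Nat.rec ⟨(0, {1}), isCompact_singleton, rfl⟩
      (fun k ih => Nat.casesOn k ⟨(1, F 1), hFcpt 1, hFone 1⟩
        (fun j => step (j+2) ih)) k
  refine ⟨fun k => (P k).1.1, ?_, rfl, fun k => (P k).1.2, rfl, ?_, ?_⟩
  · -- StrictMono
    apply strictMono_nat_of_lt_succ
    intro k
    match k with
    | 0 => exact Nat.zero_lt_one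
    | (j+1) =>
      exact hf1 (j+2) (P (j+1))
  · -- recurrence
    intro k hk
    obtain ⟨j, rfl⟩ : ∃ j, k = j + 2 := ⟨k - 2, by omega⟩
    rfl
  · -- tendsto
    have hbound : ∀ j : ℕ,
        1 ≤ (μ ((P (j+2)).1.2)).toReal / (μ (F ((P (j+2)).1.1))).toReal ∧
        (μ ((P (j+2)).1.2)).toReal / (μ (F ((P (j+2)).1.1))).toReal
          ≤ 1 + 1 / ((j+2 : ℕ) : ℝ) := by
      intro j
      set n : ℕ := (P (j+2)).1.1 with hn
      have hEdef : (P (j+2)).1.2 =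
          ((P (j+1)).1.2 ^ (N (j+2) - 2))⁻¹ * F n * ((P (j+1)).1.2 ^ (N (j+2) - 2))⁻¹ := rfl
      have hEcpt : IsCompact ((P (j+2)).1.2) := (P (j+2)).2.1
      have haF : μ (F n) ≠ ∞ := (hFcpt n).measure_lt_top.ne
      have haE : μ ((P (j+2)).1.2) ≠ ∞ := hEcpt.measure_lt_top.ne
      have ha : 0 < (μ (F n)).toReal := ENNReal.toReal_pos (hFpos n).ne' haF
      -- lower bound : F n ⊆ E
      have hsub : F n ⊆ (P (j+2)).1.2 := by
        rw [hEdef]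
        intro x hx
        have h1 : (1:G) ∈ ((P (j+1)).1.2 ^ (N (j+2) - 2))⁻¹ :=
          hone_pow _ _ (P (j+1)).2.2
        have := Set.mul_mem_mul (Set.mul_mem_mul h1 hx) h1
        simpa using this
      have hlow : 1 ≤ (μ ((P (j+2)).1.2)).toReal / (μ (F n)).toReal := by
        rw [le_div_iff₀ ha, one_mul]
        exact ENNReal.toReal_mono haE (measure_mono hsub)
      refine ⟨hlow, ?_⟩
      -- upper bound
      have hdiff : μ ((P (j+2)).1.2 \ F n) / μ (F n) ≤ ((j+2 : ℕ) : ℝ≥0∞)⁻¹ := by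
        have := hf2 (j+2) (P (j+1))
        exact this
      have hdiff_ne : μ ((P (j+2)).1.2 \ F n) ≠ ∞ :=
        ((measure_mono Set.diff_subset).trans_lt hEcpt.measure_lt_top).ne
      have hER : (μ ((P (j+2)).1.2)).toReal
          ≤ (μ (F n)).toReal + (μ ((P (j+2)).1.2 \ F n)).toReal := by
        rw [← ENNReal.toReal_add haF hdiff_ne]
        refine ENNReal.toReal_mono (by simp [haF, hdiff_ne, ENNReal.add_ne_top]) ?_
        calc μ ((P (j+2)).1.2)
            ≤ μ ((P (j+2)).1.2 ∩ F n) + μ ((P (j+2)).1.2 \ F n) :=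
              measure_le_inter_add_diff μ _ _
          _ ≤ μ (F n) + μ ((P (j+2)).1.2 \ F n) :=
              add_le_add_left (measure_mono Set.inter_subset_right) _
      have hdR : (μ ((P (j+2)).1.2 \ F n)).toReal / (μ (F n)).toReal
          ≤ 1 / ((j+2 : ℕ) : ℝ) := by
        have h1 : (μ ((P (j+2)).1.2 \ F n) / μ (F n)).toReal
            ≤ (((j+2 : ℕ) : ℝ≥0∞)⁻¹).toReal :=
          ENNReal.toReal_mono (by simp) hdiff
        rw [ENNReal.toReal_div, ENNReal.toReal_inv, ENNReal.toReal_natCast] at h1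
        simpa [one_div] using h1
      calc (μ ((P (j+2)).1.2)).toReal / (μ (F n)).toReal
          ≤ ((μ (F n)).toReal + (μ ((P (j+2)).1.2 \ F n)).toReal) / (μ (F n)).toReal :=
            by gcongr
        _ = 1 + (μ ((P (j+2)).1.2 \ F n)).toReal / (μ (F n)).toReal := by
            rw [add_div, div_self ha.ne']
        _ ≤ 1 + 1 / ((j+2 : ℕ) : ℝ) := by linarith [hdR]
    -- squeeze
    have htend : Tendsto (fun k : ℕ => 1 + 1 / (k : ℝ)) atTop (𝓝 1) := by
      simpa using ((tendsto_const_nhds (x := (1:ℝ))).add tendsto_one_div_atTop_nhds_zero_nat)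
    refine tendsto_of_tendsto_of_tendsto_of_le_of_le' tendsto_const_nhds htend ?_ ?_
    · filter_upwards [eventually_ge_atTop 2] with k hk
      obtain ⟨j, rfl⟩ : ∃ j, k = j + 2 := ⟨k - 2, by omega⟩
      exact (hbound j).1
    · filter_upwards [eventually_ge_atTop 2] with k hk
      obtain ⟨j, rfl⟩ : ∃ j, k = j + 2 := ⟨k - 2, by omega⟩
      exact (hbound j).2.trans (by norm_num)
end

section
/- Let G be a locally compact second countable topological group with left Haar measure λ, and let (F_n) be a sequence of compact subsets of G with 0 < λ(F_n) < ∞ such that for every compact E ⊆ G, λ(E F_n \ F_n)/λ(F_n) → 0 as n → ∞. Then the subgroup of G generated by ⋃_{n} F_n is all of G. -/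
open MeasureTheory Pointwise Filter Topology
open scoped ENNReal

/-- If `(F n)` is a sequence of compact sets of positive finite left Haar measure in
a locally compact second countable group which is left Følner (for every compact
`E`, `μ (E F n \ F n) / μ (F n) → 0`), then the subgroup generated by `⋃ n, F n`
is all of `G`. -/
theorem stmt8 {G : Type*} [Group G] [TopologicalSpace G] [IsTopologicalGroup G]
    [LocallyCompactSpace G] [SecondCountableTopology G]
    [MeasurableSpace G] [BorelSpace G]
    (μ : Measure G) [μ.IsHaarMeasure]
    (F : ℕ → Set G)
    (hFcpt : ∀ n, IsCompact (F n))
    (hFpos : ∀ n, 0 < μ (F n))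
    (hFfin : ∀ n, μ (F n) < ⊤)
    (hFol : ∀ E : Set G, IsCompact E →
      Tendsto (fun n => μ ((E * F n) \ F n) / μ (F n)) atTop (𝓝 0)) :
    Subgroup.closure (⋃ n, F n) = ⊤ := by
  rw [Subgroup.eq_top_iff']
  intro g
  have h := hFol {g} isCompact_singleton
  have hlt : ∀ᶠ n in atTop, μ (({g} * F n) \ F n) / μ (F n) < 1 :=
    h.eventually_lt_const one_pos
  obtain ⟨n, hn⟩ := hlt.exists
  have hnum : μ (({g} * F n) \ F n) < μ (F n) := by
    have := (ENNReal.div_lt_iff (Or.inl (hFpos n).ne') (Or.inl (hFfin n).ne)).mp hn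
    simpa using this
  have hsmul : μ (g • F n) = μ (F n) := measure_smul (μ := μ) g (F n)
  have hinter : (g • F n ∩ F n).Nonempty := by
    by_contra hcon
    rw [Set.not_nonempty_iff_eq_empty] at hcon
    have hsub : g • F n ⊆ (g • F n) \ F n := fun x hx =>
      ⟨hx, fun hx2 => Set.eq_empty_iff_forall_notMem.mp hcon x ⟨hx, hx2⟩⟩
    have : μ (F n) ≤ μ (({g} * F n) \ F n) := by
      rw [Set.singleton_mul]
      calc μ (F n) = μ (g • F n) := hsmul.symm
        _ ≤ μ ((g • F n) \ F n) := measure_mono hsub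
    exact absurd hnum (not_lt.mpr this)
  obtain ⟨x, hx1, hx2⟩ := hinter
  obtain ⟨a, ha, rfl⟩ := hx1
  have hmem : ∀ y ∈ F n, y ∈ Subgroup.closure (⋃ n, F n) := fun y hy =>
    Subgroup.subset_closure (Set.mem_iUnion.mpr ⟨n, hy⟩)
  have : g = (g • a) * a⁻¹ := by simp [smul_eq_mul]
  rw [this]
  exact mul_mem (hmem _ hx2) (inv_mem (hmem _ ha))
end

section
/- Let (X, μ) be a probability space and let G be a topological group equipped with its Borel σ-algebra, acting on X by measure-preserving transformations such that the action map G × X → X is measurable. Let ω be a Borel probability measure on G, and for f ∈ L²(X, μ) define (Tf)(x) = ∫_G f(g⁻¹·x) dω(g). If f ∈ L²(X, μ) satisfies Tf = f in L²(X, μ), then for ω-almost every g ∈ G one has f(g⁻¹·x) = f(x) for μ-almost every x ∈ X. -/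
open MeasureTheory

/-- If a topological group `G` acts measurably and measure-preservingly on a
probability space `(X, μ)`, `ω` is a Borel probability measure on `G`, and
`f ∈ L²(X, μ)` satisfies `T f = f` in `L²` where `(T f)(x) = ∫ f(g⁻¹ • x) dω(g)`,
then for `ω`-almost every `g`, `f(g⁻¹ • x) = f(x)` for `μ`-almost every `x`. -/
theorem stmt9 {G X : Type*} [Group G] [TopologicalSpace G] [IsTopologicalGroup G]
    [MeasurableSpace G] [BorelSpace G]
    [MeasurableSpace X] (μ : Measure X) [IsProbabilityMeasure μ]
    [MulAction G X]
    (hmeas : Measurable fun p : G × X => p.1 • p.2)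
    (hmp : ∀ g : G, MeasurePreserving (fun x => g • x) μ μ)
    (ω : Measure G) [IsProbabilityMeasure ω]
    (f : X → ℝ) (hf : MemLp f 2 μ)
    (hfix : (fun x => ∫ g, f (g⁻¹ • x) ∂ω) =ᵐ[μ] f) :
    ∀ᵐ g ∂ω, (fun x => f (g⁻¹ • x)) =ᵐ[μ] f := by
  classical
  haveI : MeasurableSMul G X :=
    { measurable_const_smul := fun g => hmeas.comp (measurable_const.prodMk measurable_id),
      measurable_smul_const := fun x => hmeas.comp (measurable_id.prodMk measurable_const) }
  obtain ⟨f₀, hf₀m, hff₀⟩ : ∃ f₀ : X → ℝ, Measurable f₀ ∧ f =ᵐ[μ] f₀ :=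
    ⟨hf.1.mk f, hf.1.stronglyMeasurable_mk.measurable, hf.1.ae_eq_mk⟩
  have hf₀ : MemLp f₀ 2 μ := hf.ae_eq hff₀
  set m : G × X → X := fun p => p.1⁻¹ • p.2 with hm
  have hmm : Measurable m := hmeas.comp (measurable_fst.inv.prodMk measurable_snd)
  have hsq : Integrable (fun x => f₀ x ^ 2) μ := hf₀.integrable_sq
  set A : ℝ := ∫ x, f₀ x ^ 2 ∂μ with hA
  have hmpg : ∀ g : G, MeasurePreserving (fun x : X => g⁻¹ • x) μ μ := fun g => hmp g⁻¹
  -- per-g integrability and integral of the squared composition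
  have hsect : ∀ g : G, Integrable (fun x => f₀ (g⁻¹ • x) ^ 2) μ := fun g =>
    ((hmpg g).integrable_comp hsq.aestronglyMeasurable).2 hsq
  have hInt : ∀ g : G, ∫ x, f₀ (g⁻¹ • x) ^ 2 ∂μ = A := fun g =>
    MeasurePreserving.integral_comp' (f := MeasurableEquiv.smul (g⁻¹ : G)) (hmpg g)
      (fun x => f₀ x ^ 2)
  -- integrability on products
  have hH2 : Integrable (fun p : G × X => f₀ (m p) ^ 2) (ω.prod μ) := by
    refine (integrable_prod_iff (((hf₀m.comp hmm).pow_const 2).aestronglyMeasurable)).2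
      ⟨Filter.Eventually.of_forall fun g => hsect g, ?_⟩
    refine (integrable_const A).congr (Filter.Eventually.of_forall fun g => ?_)
    simp_rw [Real.norm_eq_abs, abs_pow, sq_abs]
    exact (hInt g).symm
  have hI2 : Integrable (fun p : G × X => f₀ p.2 ^ 2) (ω.prod μ) := by
    simpa using (integrable_const (1 : ℝ)).mul_prod hsq
  have hHL2 : MemLp (fun p : G × X => f₀ (m p)) 2 (ω.prod μ) :=
    (memLp_two_iff_integrable_sq (hf₀m.comp hmm).aestronglyMeasurable).2 hH2
  have hfL2 : MemLp (fun p : G × X => f₀ p.2) 2 (ω.prod μ) :=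
    (memLp_two_iff_integrable_sq (hf₀m.comp measurable_snd).aestronglyMeasurable).2 hI2
  have hD : Integrable (fun p : G × X => (f₀ (m p) - f₀ p.2) ^ 2) (ω.prod μ) :=
    (hHL2.sub hfL2).integrable_sq
  have hcross : Integrable (fun p : G × X => f₀ (m p) * f₀ p.2) (ω.prod μ) := by
    have h := (((hHL2.add hfL2).integrable_sq.sub hH2).sub hI2).div_const 2
    refine h.congr (Filter.Eventually.of_forall fun p => ?_)
    simp only [Pi.sub_apply, Pi.add_apply]
    ring
  -- the null set where f ≠ f₀, pulled back by the action
  set t : Set X := toMeasurable μ {x | f x ≠ f₀ x} with ht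
  have htm : MeasurableSet t := measurableSet_toMeasurable _ _
  have ht0 : μ t = 0 := by
    rw [measure_toMeasurable]
    exact hff₀
  have hS0 : (ω.prod μ) (m ⁻¹' t) = 0 := by
    rw [Measure.prod_apply (hmm htm)]
    have : ∀ g : G, μ (Prod.mk g ⁻¹' (m ⁻¹' t)) = 0 := fun g => by
      have : Prod.mk g ⁻¹' (m ⁻¹' t) = (fun x : X => g⁻¹ • x) ⁻¹' t := rfl
      rw [this, (hmpg g).measure_preimage htm.nullMeasurableSet, ht0]
    simp [this]
  -- swap to get: for a.e. x, for a.e. g, f (g⁻¹ • x) = f₀ (g⁻¹ • x)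
  have hswap : ∀ᵐ x ∂μ, ∀ᵐ g ∂ω, f (g⁻¹ • x) = f₀ (g⁻¹ • x) := by
    have hS'm : MeasurableSet {q : X × G | q.2⁻¹ • q.1 ∈ t} :=
      (hmeas.comp (measurable_snd.inv.prodMk measurable_fst)) htm
    have hS'0 : (μ.prod ω) {q : X × G | q.2⁻¹ • q.1 ∈ t} = 0 := by
      rw [← Measure.prod_swap, Measure.map_apply measurable_swap hS'm]
      exact hS0
    have hnm : ∀ᵐ q ∂(μ.prod ω), q.2⁻¹ • q.1 ∉ t :=
      measure_eq_zero_iff_ae_notMem.1 hS'0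
    have := Measure.ae_ae_of_ae_prod hnm
    filter_upwards [this] with x hx
    filter_upwards [hx] with g hg
    by_contra hne
    exact hg (subset_toMeasurable μ _ hne)
  -- key: for a.e. x, ∫ g, f₀ (g⁻¹ • x) dω = f₀ x
  have hkey : ∀ᵐ x ∂μ, ∫ g, f₀ (g⁻¹ • x) ∂ω = f₀ x := by
    filter_upwards [hswap, hfix, hff₀] with x hx h1 h2
    rw [← h2, ← h1]
    exact integral_congr_ae (hx.mono fun g hg => hg.symm)
  -- compute the three integrals over the product
  have E1 : ∫ p, f₀ (m p) ^ 2 ∂(ω.prod μ) = A := by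
    rw [integral_prod _ hH2]
    simp [hm, hInt]
  have E2 : ∫ p, f₀ p.2 ^ 2 ∂(ω.prod μ) = A := by
    rw [integral_prod _ hI2]
    simp [hA]
  have E3 : ∫ p, f₀ (m p) * f₀ p.2 ∂(ω.prod μ) = A := by
    rw [integral_prod _ hcross]
    have hsw := integral_integral_swap (f := fun (g : G) (x : X) => f₀ (g⁻¹ • x) * f₀ x)
      hcross
    rw [hsw]
    rw [hA]
    refine integral_congr_ae ?_
    filter_upwards [hkey] with x hx
    rw [integral_mul_const, hx, sq]
  -- the integral of the square of the difference vanishes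
  have hDint : ∫ p, (f₀ (m p) - f₀ p.2) ^ 2 ∂(ω.prod μ) = 0 := by
    have hrw : (fun p : G × X => (f₀ (m p) - f₀ p.2) ^ 2) =
        fun p => f₀ (m p) ^ 2 + f₀ p.2 ^ 2 - 2 * (f₀ (m p) * f₀ p.2) := by
      funext p; ring
    have hadd : Integrable (fun p : G × X => f₀ (m p) ^ 2 + f₀ p.2 ^ 2) (ω.prod μ) :=
      hH2.add hI2
    have hmul2 : Integrable (fun p : G × X => 2 * (f₀ (m p) * f₀ p.2)) (ω.prod μ) :=
      hcross.const_mul 2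
    rw [hrw, integral_sub hadd hmul2, integral_add hH2 hI2, MeasureTheory.integral_const_mul, E1, E2, E3]
    ring
  have hD0 : ∀ᵐ p ∂(ω.prod μ), (f₀ (m p) - f₀ p.2) ^ 2 = 0 := by
    have := (integral_eq_zero_iff_of_nonneg (fun p => sq_nonneg _) hD).1 hDint
    filter_upwards [this] with p hp using hp
  have hae : ∀ᵐ g ∂ω, ∀ᵐ x ∂μ, f₀ (g⁻¹ • x) = f₀ x := by
    have := Measure.ae_ae_of_ae_prod hD0
    filter_upwards [this] with g hg
    filter_upwards [hg] with x hx
    have := pow_eq_zero_iff (n := 2) (by norm_num) |>.1 hx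
    linarith [sub_eq_zero.1 this]
  filter_upwards [hae] with g hg
  have h1 : (fun x => f (g⁻¹ • x)) =ᵐ[μ] fun x => f₀ (g⁻¹ • x) :=
    (hmpg g).quasiMeasurePreserving.ae_eq_comp hff₀
  have hg' : (fun x => f₀ (g⁻¹ • x)) =ᵐ[μ] f₀ := hg
  exact h1.trans (hg'.trans hff₀.symm)
end

section
/- Define l : ℕ → ℕ by l(1) = 1 and l(n) = 17^{2^n · l(n−1)} for n ≥ 2, and define m(n) = l(n) + Σ_{j=1}^{n−1} l(j) · 2^{(n²−j²+3n−3j−4)/2} · ∏_{k=j}^{n−1} (1 − 2^{−k}) for n ≥ 2. Then for every n ≥ 2, m(n) < 2·l(n). -/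
lemma stmt16_pow_aux : ∀ n : ℕ, n ^ 2 + 5 * n ≤ 2 ^ (n + 3) := by
  intro n
  induction n with
  | zero => norm_num
  | succ k ih =>
    have h2 : k < 2 ^ k := Nat.lt_two_pow_self (n := k)
    have h3 : 2 ^ (k + 1 + 3) = 2 * 2 ^ (k + 3) := by ring
    have h4 : 2 ^ (k + 3) = 8 * 2 ^ k := by ring
    nlinarith [ih]

/-- With `l 1 = 1`, `l n = 17 ^ (2^n * l (n-1))` for `n ≥ 2`, and
`m n = l n + ∑_{j=1}^{n-1} l j * 2^{(n²-j²+3n-3j-4)/2} * ∏_{k=j}^{n-1} (1 - 2^{-k})`,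
one has `m n < 2 * l n` for every `n ≥ 2`. -/
theorem stmt16 (l : ℕ → ℕ) (m : ℕ → ℝ)
    (hl1 : l 1 = 1)
    (hl : ∀ n ≥ 2, l n = 17 ^ (2 ^ n * l (n - 1)))
    (hm : ∀ n ≥ 2, m n = (l n : ℝ) +
      ∑ j ∈ Finset.Icc 1 (n - 1), (l j : ℝ) *
        2 ^ ((n ^ 2 - j ^ 2 + 3 * n - 3 * j - 4) / 2) *
        ∏ k ∈ Finset.Icc j (n - 1), (1 - ((2 : ℝ) ^ k)⁻¹)) :
    ∀ n ≥ 2, m n < 2 * (l n : ℝ) := by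
  -- step monotonicity of l
  have hstep : ∀ b, 1 ≤ b → l b ≤ l (b + 1) := by
    intro b hb
    rw [hl (b + 1) (by omega)]
    simp only [Nat.add_sub_cancel]
    calc l b ≤ 2 ^ l b := Nat.le_of_lt (Nat.lt_two_pow_self)
      _ ≤ 17 ^ l b := Nat.pow_le_pow_left (by norm_num) _
      _ ≤ 17 ^ (2 ^ (b + 1) * l b) := by
          apply Nat.pow_le_pow_right (by norm_num)
          exact Nat.le_mul_of_pos_left _ (Nat.pow_pos (by norm_num))
  have hmono : ∀ a b : ℕ, 1 ≤ a → a ≤ b → l a ≤ l b := by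
    intro a b ha hab
    induction b with
    | zero => omega
    | succ k ih =>
      rcases Nat.lt_or_ge k a with h | h
      · have : a = k + 1 := by omega
        rw [this]
      · exact le_trans (ih h) (hstep k (by omega))
  have hlpos : ∀ b, 1 ≤ b → 1 ≤ l b := by
    intro b hb
    calc 1 = l 1 := hl1.symm
      _ ≤ l b := hmono 1 b le_rfl hb
  intro n hn
  set L := l (n - 1) with hLdef
  have hL1 : 1 ≤ L := hlpos (n - 1) (by omega)
  set P := (n ^ 2 + 3 * n) / 2 with hPdef
  -- key exponent inequality : n - 1 + L + P ≤ 4 * (2 ^ n * L)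
  have key_exp : n - 1 + L + P ≤ 4 * (2 ^ n * L) := by
    have h1 : 2 * P ≤ n ^ 2 + 3 * n := by
      rw [hPdef, mul_comm]
      exact Nat.div_mul_le_self _ 2
    have h2 : n ^ 2 + 5 * n ≤ 8 * 2 ^ n := by
      have := stmt16_pow_aux n
      have h8 : 2 ^ (n + 3) = 8 * 2 ^ n := by ring
      omega
    have h3 : P + n ≤ 4 * 2 ^ n := by omega
    obtain ⟨K, hK⟩ : ∃ K, L = K + 1 := ⟨L - 1, by omega⟩
    rw [hK]
    have h5 : 4 * (2 ^ n * (K + 1)) = 4 * 2 ^ n * K + 4 * 2 ^ n := by ring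
    rw [h5]
    have h4 : K ≤ 4 * 2 ^ n * K := Nat.le_mul_of_pos_left _ (by positivity)
    have h6 : n - 1 + (K + 1) + P ≤ K + (4 * 2 ^ n) := by omega
    omega
  -- key natural number inequality
  have key : ∑ j ∈ Finset.Icc 1 (n - 1),
      l j * 2 ^ ((n ^ 2 - j ^ 2 + 3 * n - 3 * j - 4) / 2) < l n := by
    calc ∑ j ∈ Finset.Icc 1 (n - 1),
        l j * 2 ^ ((n ^ 2 - j ^ 2 + 3 * n - 3 * j - 4) / 2)
        ≤ ∑ _j ∈ Finset.Icc 1 (n - 1), L * 2 ^ P := by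
          apply Finset.sum_le_sum
          intro j hj
          rw [Finset.mem_Icc] at hj
          apply Nat.mul_le_mul
          · exact hmono j (n - 1) hj.1 hj.2
          · apply Nat.pow_le_pow_right (by norm_num)
            apply Nat.div_le_div_right
            omega
      _ = (n - 1) * (L * 2 ^ P) := by
          rw [Finset.sum_const, Nat.card_Icc, smul_eq_mul]
          simp
      _ ≤ 2 ^ (n - 1) * (2 ^ L * 2 ^ P) := by
          apply Nat.mul_le_mul
          · exact Nat.le_of_lt (Nat.lt_two_pow_self)
          · exact Nat.mul_le_mul_right _ (Nat.le_of_lt (Nat.lt_two_pow_self))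
      _ = 2 ^ (n - 1 + L + P) := by rw [pow_add, pow_add]; ring
      _ ≤ 2 ^ (4 * (2 ^ n * L)) := Nat.pow_le_pow_right (by norm_num) key_exp
      _ = 16 ^ (2 ^ n * L) := by rw [pow_mul]; norm_num
      _ < 17 ^ (2 ^ n * L) := by
          apply Nat.pow_lt_pow_left (by norm_num)
          have : 0 < 2 ^ n * L := Nat.mul_pos (by positivity) hL1
          omega
      _ = l n := (hl n hn).symm
  rw [hm n hn]
  have hsum : ∑ j ∈ Finset.Icc 1 (n - 1), (l j : ℝ) *
        2 ^ ((n ^ 2 - j ^ 2 + 3 * n - 3 * j - 4) / 2) *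
        ∏ k ∈ Finset.Icc j (n - 1), (1 - ((2 : ℝ) ^ k)⁻¹)
      ≤ ∑ j ∈ Finset.Icc 1 (n - 1),
        ((l j * 2 ^ ((n ^ 2 - j ^ 2 + 3 * n - 3 * j - 4) / 2) : ℕ) : ℝ) := by
    apply Finset.sum_le_sum
    intro j hj
    push_cast
    have hnn : (0 : ℝ) ≤ (l j : ℝ) * 2 ^ ((n ^ 2 - j ^ 2 + 3 * n - 3 * j - 4) / 2) := by
      positivity
    have hprod : ∏ k ∈ Finset.Icc j (n - 1), (1 - ((2 : ℝ) ^ k)⁻¹) ≤ 1 := by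
      apply Finset.prod_le_one
      · intro k _
        have h1 : ((2 : ℝ) ^ k)⁻¹ ≤ 1 := by
          rw [inv_le_one_iff₀]
          right
          exact one_le_pow₀ (by norm_num)
        linarith
      · intro k _
        have h0 : (0 : ℝ) < ((2 : ℝ) ^ k)⁻¹ := by positivity
        linarith
    calc (l j : ℝ) * 2 ^ ((n ^ 2 - j ^ 2 + 3 * n - 3 * j - 4) / 2) *
          ∏ k ∈ Finset.Icc j (n - 1), (1 - ((2 : ℝ) ^ k)⁻¹)
        ≤ (l j : ℝ) * 2 ^ ((n ^ 2 - j ^ 2 + 3 * n - 3 * j - 4) / 2) * 1 :=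
          mul_le_mul_of_nonneg_left hprod hnn
      _ = (l j : ℝ) * 2 ^ ((n ^ 2 - j ^ 2 + 3 * n - 3 * j - 4) / 2) := mul_one _
  have hcast : ∑ j ∈ Finset.Icc 1 (n - 1),
      ((l j * 2 ^ ((n ^ 2 - j ^ 2 + 3 * n - 3 * j - 4) / 2) : ℕ) : ℝ)
      < (l n : ℝ) := by
    rw [← Nat.cast_sum]
    exact_mod_cast key
  linarith
end

section
/- Define l(n) = 2^{n²} for n ≥ 1, and define m(1) = l(1) = 2 and m(n) = l(n) + 2·(2^n − 2)·m(n−1) for n ≥ 2. Then m(n)/l(n) → 1 as n → ∞. -/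
open Filter Topology

/-- With `l n = 2 ^ (n²)` for `n ≥ 1`, `m 1 = l 1 = 2` and
`m n = l n + 2 * (2^n - 2) * m (n-1)` for `n ≥ 2`, we have `m n / l n → 1`. -/
theorem stmt18 (l m : ℕ → ℕ)
    (hl : ∀ n ≥ 1, l n = 2 ^ (n ^ 2))
    (hm1 : m 1 = 2)
    (hm : ∀ n ≥ 2, m n = l n + 2 * (2 ^ n - 2) * m (n - 1)) :
    Tendsto (fun n => (m n : ℝ) / (l n : ℝ)) atTop (𝓝 1) := by
  -- key bounds: for n ≥ 2, l n ≤ m n and m n * 2^n ≤ (2^n + 12) * l n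
  have key : ∀ k : ℕ, (l (k + 2) : ℝ) ≤ (m (k + 2) : ℝ) ∧
      (m (k + 2) : ℝ) * 2 ^ (k + 2) ≤ (2 ^ (k + 2) + 12) * (l (k + 2) : ℝ) := by
    intro k
    induction k with
    | zero =>
      have h2 : m 2 = l 2 + 2 * (2 ^ 2 - 2) * m 1 := hm 2 (by norm_num)
      have hl2 : l 2 = 2 ^ (2 ^ 2) := hl 2 (by norm_num)
      rw [h2, hl2, hm1]
      norm_num
    | succ k ih =>
      obtain ⟨ih1, ih2⟩ := ih
      set x : ℝ := 2 ^ (k + 3) with hx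
      have hx8 : (8 : ℝ) ≤ x := by
        rw [hx]
        calc (8 : ℝ) = 2 ^ 3 := by norm_num
        _ ≤ 2 ^ (k + 3) := by
          apply pow_le_pow_right₀ (by norm_num); omega
      have hx2 : (2 : ℝ) ≤ x := by linarith
      -- l values
      have hl3 : (l (k + 3) : ℝ) = 2 ^ ((k + 3) ^ 2) := by
        rw [hl (k + 3) (by omega)]; push_cast; ring
      have hl2' : (l (k + 2) : ℝ) = 2 ^ ((k + 2) ^ 2) := by
        rw [hl (k + 2) (by omega)]; push_cast; ring
      set L : ℝ := 2 ^ ((k + 2) ^ 2) with hL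
      have hLpos : (0 : ℝ) < L := by positivity
      -- relation between l (k+3) and L, x
      have hrel : 2 * (l (k + 3) : ℝ) = L * x ^ 2 := by
        rw [hl3, hL, hx, ← pow_mul, ← pow_add, ← pow_succ']
        congr 1
        ring
      -- recurrence, cast to ℝ
      have h2le : 2 ≤ 2 ^ (k + 3) := by
        calc 2 = 2 ^ 1 := by norm_num
        _ ≤ 2 ^ (k + 3) := Nat.pow_le_pow_right (by norm_num) (by omega)
      have hrec : (m (k + 3) : ℝ) = (l (k + 3) : ℝ) + (2 * x - 4) * (m (k + 2) : ℝ) := by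
        have := hm (k + 3) (by omega)
        rw [show k + 3 - 1 = k + 2 from rfl] at this
        rw [this]
        push_cast [Nat.cast_sub h2le]
        rw [hx]; ring
      have hmpos : (0 : ℝ) ≤ (m (k + 2) : ℝ) := by positivity
      constructor
      · rw [hrec]
        nlinarith [hmpos, hx2]
      · rw [hrec]
        -- IH scaled: m (k+2) * x ≤ (x + 24) * L
        have hxy : x = 2 * 2 ^ (k + 2) := by rw [hx]; ring
        have ih2' : (m (k + 2) : ℝ) * x ≤ (x + 24) * L := by
          rw [hxy]
          rw [hl2'] at ih2
          nlinarith [ih2]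
        -- goal: (l(k+3) + (2x-4) * m(k+2)) * x ≤ (x + 12) * l(k+3)
        have hxpos : (0 : ℝ) < x := by linarith
        have h6 : (2 * x - 4) * ((x + 24) * L) ≤ 6 * x ^ 2 * L := by
          nlinarith [mul_nonneg (mul_nonneg hLpos.le (by linarith : (0:ℝ) ≤ x - 8)) (by linarith : (0:ℝ) ≤ x - 3)]
        have hmx : (2 * x - 4) * (m (k + 2) : ℝ) * x ≤ 6 * x ^ 2 * L := by
          calc (2 * x - 4) * (m (k + 2) : ℝ) * x = (2 * x - 4) * ((m (k + 2) : ℝ) * x) := by ring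
          _ ≤ (2 * x - 4) * ((x + 24) * L) := by
              apply mul_le_mul_of_nonneg_left ih2' (by linarith)
          _ ≤ 6 * x ^ 2 * L := h6
        nlinarith [hrel, hmx]
  -- squeeze
  have hbound : ∀ᶠ n in atTop, (1 : ℝ) ≤ (m n : ℝ) / (l n : ℝ) ∧
      (m n : ℝ) / (l n : ℝ) ≤ 1 + 12 * (1 / 2) ^ n := by
    filter_upwards [eventually_ge_atTop 2] with n hn
    obtain ⟨k, rfl⟩ : ∃ k, n = k + 2 := ⟨n - 2, by omega⟩
    obtain ⟨h1, h2⟩ := key k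
    have hlpos : (0 : ℝ) < (l (k + 2) : ℝ) := by
      rw [hl (k + 2) (by omega)]; positivity
    constructor
    · rw [le_div_iff₀ hlpos]; linarith
    · rw [div_le_iff₀ hlpos]
      have hxpos : (0 : ℝ) < (2 : ℝ) ^ (k + 2) := by positivity
      have : (m (k + 2) : ℝ) ≤ (2 ^ (k + 2) + 12) * (l (k + 2) : ℝ) / 2 ^ (k + 2) := by
        rw [le_div_iff₀ hxpos]; linarith
      calc (m (k + 2) : ℝ) ≤ (2 ^ (k + 2) + 12) * (l (k + 2) : ℝ) / 2 ^ (k + 2) := this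
      _ = (1 + 12 * (1 / 2) ^ (k + 2)) * (l (k + 2) : ℝ) := by
          field_simp
          have hP : (2:ℝ) ^ (k + 2) * (1 / 2) ^ (k + 2) = 1 := by rw [← mul_pow]; norm_num
          linear_combination (-12) * hP
  have hupper : Tendsto (fun n : ℕ => 1 + 12 * (1 / 2 : ℝ) ^ n) atTop (𝓝 1) := by
    have : Tendsto (fun n : ℕ => (1 / 2 : ℝ) ^ n) atTop (𝓝 0) :=
      tendsto_pow_atTop_nhds_zero_of_lt_one (by norm_num) (by norm_num)
    have := (this.const_mul 12).const_add 1
    simpa using this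
  apply tendsto_of_tendsto_of_tendsto_of_le_of_le' tendsto_const_nhds hupper
  · filter_upwards [hbound] with n h using h.1
  · filter_upwards [hbound] with n h using h.2
end
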